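/- Suppose Z Zᵀ is invertible. Then the matrix U M_Z Uᵀ fails to be positive definite if and only if there exist a vector a ∈ ℝ^m with a ≠ 0 and a vector h ∈ ℝ^d such that aᵀ U = hᵀ Z (i.e., the input combination aᵀ U lies in the row span of the lifted-state data Z). -/

import Mathlib

open Matrix

/-- With `Z Zᵀ` invertible, `U M_Z Uᵀ` fails to be positive definite iff
some nontrivial input combination `aᵀ U` lies in the row span of `Z`, i.e.
`aᵀ U = hᵀ Z` for some `a ≠ 0` and some `h`. -/
theorem not_posDef_iff_input_combination_in_row_span
    (d m N : ℕ) (hN : 1 ≤ N)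
    (Z : Matrix (Fin d) (Fin N) ℝ) (U : Matrix (Fin m) (Fin N) ℝ)
    (hZ : IsUnit (Z * Zᵀ).det)
    (P_Z : Matrix (Fin N) (Fin N) ℝ) (hP : P_Z = Zᵀ * (Z * Zᵀ)⁻¹ * Z)
    (M_Z : Matrix (Fin N) (Fin N) ℝ) (hM : M_Z = 1 - P_Z) :
    ¬ (U * M_Z * Uᵀ).PosDef ↔
      ∃ (a : Fin m → ℝ), a ≠ 0 ∧ ∃ (h : Fin d → ℝ), a ᵥ* U = h ᵥ* Z := by
  have hinv : (Z * Zᵀ)⁻¹ * (Z * Zᵀ) = 1 := Matrix.nonsing_inv_mul _ hZ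
  -- M_Z annihilates Zᵀ
  have hMZt : M_Z * Zᵀ = 0 := by
    rw [hM, hP, Matrix.sub_mul, Matrix.one_mul]
    have h1 : Zᵀ * (Z * Zᵀ)⁻¹ * Z * Zᵀ = Zᵀ * ((Z * Zᵀ)⁻¹ * (Z * Zᵀ)) := by
      simp [Matrix.mul_assoc]
    rw [h1, hinv, Matrix.mul_one, sub_self]
  -- M_Z is symmetric
  have hMsymm : M_Zᵀ = M_Z := by
    rw [hM, hP]
    simp only [Matrix.transpose_sub, Matrix.transpose_one, Matrix.transpose_mul,
      Matrix.transpose_transpose, Matrix.transpose_nonsing_inv]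
    rw [← Matrix.mul_assoc]
  have hZM : Z * M_Z = 0 := by
    have h1 := congrArg Matrix.transpose hMZt
    simpa [Matrix.transpose_mul, hMsymm] using h1
  -- M_Z is idempotent
  have hPM : P_Z * M_Z = 0 := by
    rw [hP, Matrix.mul_assoc, hZM, Matrix.mul_zero]
  have hMidem : M_Z * M_Z = M_Z := by
    nth_rewrite 1 [hM]
    rw [Matrix.sub_mul, Matrix.one_mul, hPM, sub_zero]
  -- factorization
  have hfact : U * M_Z * Uᵀ = (M_Z * Uᵀ)ᵀ * (M_Z * Uᵀ) := by
    rw [Matrix.transpose_mul, Matrix.transpose_transpose, hMsymm,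
      ← Matrix.mul_assoc, Matrix.mul_assoc U M_Z M_Z, hMidem]
  set B := M_Z * Uᵀ with hB
  have hquad : ∀ x : Fin m → ℝ,
      dotProduct (star x) ((U * M_Z * Uᵀ) *ᵥ x) = (B *ᵥ x) ⬝ᵥ (B *ᵥ x) := by
    intro x
    rw [hfact, star_trivial, ← Matrix.mulVec_mulVec, Matrix.dotProduct_mulVec,
      Matrix.vecMul_transpose]
  have hherm : (U * M_Z * Uᵀ).IsHermitian := by
    rw [Matrix.IsHermitian, conjTranspose_eq_transpose_of_trivial, hfact,
      Matrix.transpose_mul, Matrix.transpose_transpose]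
  constructor
  · intro hnot
    rw [Matrix.posDef_iff_dotProduct_mulVec] at hnot
    push_neg at hnot
    obtain ⟨a, ha, hle⟩ := hnot hherm
    have hz : B *ᵥ a = 0 := by
      have h2 : (B *ᵥ a) ⬝ᵥ (B *ᵥ a) ≤ 0 := by rw [← hquad a]; exact hle
      have h4 : (0:ℝ) ≤ (B *ᵥ a) ⬝ᵥ (B *ᵥ a) := by
        simpa using dotProduct_self_star_nonneg (B *ᵥ a)
      exact dotProduct_self_eq_zero.mp (le_antisymm h2 h4)
    refine ⟨a, ha, ((Z * Zᵀ)⁻¹ * Z) *ᵥ (Uᵀ *ᵥ a), ?_⟩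
    have hx : Uᵀ *ᵥ a = P_Z *ᵥ (Uᵀ *ᵥ a) := by
      have h0 : (M_Z * Uᵀ) *ᵥ a = 0 := hz
      rw [hM, Matrix.sub_mul, Matrix.one_mul, Matrix.sub_mulVec,
        ← Matrix.mulVec_mulVec] at h0
      exact sub_eq_zero.mp h0
    rw [← Matrix.mulVec_transpose U a, ← Matrix.mulVec_transpose Z]
    calc Uᵀ *ᵥ a = P_Z *ᵥ (Uᵀ *ᵥ a) := hx
      _ = Zᵀ *ᵥ (((Z * Zᵀ)⁻¹ * Z) *ᵥ (Uᵀ *ᵥ a)) := by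
          simp [hP, Matrix.mulVec_mulVec, Matrix.mul_assoc]
  · rintro ⟨a, ha, h, hah⟩ hpd
    have hz : B *ᵥ a = 0 := by
      have hU : Uᵀ *ᵥ a = Zᵀ *ᵥ h := by
        rw [Matrix.mulVec_transpose, Matrix.mulVec_transpose]; exact hah
      rw [hB, ← Matrix.mulVec_mulVec, hU, Matrix.mulVec_mulVec, hMZt,
        Matrix.zero_mulVec]
    have hpos := (Matrix.posDef_iff_dotProduct_mulVec.mp hpd).2 ha
    rw [hquad a, hz] at hpos
    simp at hpos
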